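/- Let (Ω_1, μ_1), …, (Ω_n, μ_n) be probability spaces and let μ = μ_1 ⊗ ⋯ ⊗ μ_n be the product measure on Ω_1 × ⋯ × Ω_n. Let B ⊆ Ω_1 × ⋯ × Ω_n be a measurable set with μ(B) = 1. Then there exist countable sets I_α ⊆ Ω_α (α = 1, …, n) such that every tuple (c_1, …, c_n) ∈ I_1 × ⋯ × I_n lies in B, and moreover each I_α can be chosen so that (I_α viewed as a sequence) avoids any prescribed countable family of μ_α^{⊗ω}-null measurable subsets of Ω_α^ω. -/

import Mathlib

open MeasureTheory

/-- From a measurable set of full product measure one can extract, for each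
coordinate, a sequence avoiding any prescribed countable family of null sets of
the countable power `μ_α^{⊗ω}` (given here as a probability measure `ν α` on
`ℕ → Ω α` whose finite-dimensional marginals are products), such that the
Cartesian product of the ranges of these sequences lies inside `B`. -/
theorem stmt4 {n : ℕ} {Ω : Fin n → Type*} [∀ i, MeasurableSpace (Ω i)]
    (μ : (i : Fin n) → Measure (Ω i)) [∀ i, IsProbabilityMeasure (μ i)]
    (B : Set ((i : Fin n) → Ω i)) (hB : MeasurableSet B)
    (h1 : Measure.pi μ B = 1)
    (ν : (i : Fin n) → Measure (ℕ → Ω i)) [∀ i, IsProbabilityMeasure (ν i)]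
    (hν : ∀ (i : Fin n) (t : Finset ℕ) (s : ℕ → Set (Ω i)),
      (∀ j, MeasurableSet (s j)) →
      ν i {x | ∀ j ∈ t, x j ∈ s j} = ∏ j ∈ t, μ i (s j))
    (N : (i : Fin n) → ℕ → Set (ℕ → Ω i))
    (hNm : ∀ i m, MeasurableSet (N i m))
    (hN0 : ∀ i m, ν i (N i m) = 0) :
    ∃ b : (i : Fin n) → ℕ → Ω i,
      (∀ i m, b i ∉ N i m) ∧
      ∀ c : (i : Fin n) → Ω i, (∀ i, ∃ j, c i = b i j) → c ∈ B := by
  -- each evaluation is measure preserving from ν i to μ i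
  have heval : ∀ (i : Fin n) (j : ℕ),
      MeasurePreserving (fun x : ℕ → Ω i => x j) (ν i) (μ i) := by
    intro i j
    refine ⟨measurable_pi_apply j, ?_⟩
    refine Measure.ext fun s hs => ?_
    rw [Measure.map_apply (measurable_pi_apply j) hs]
    have := hν i {j} (fun _ => s) (fun _ => hs)
    simp at this; exact this
  have hΦ : ∀ f : Fin n → ℕ,
      MeasurePreserving (fun (b : (i : Fin n) → ℕ → Ω i) i => b i (f i))
        (Measure.pi ν) (Measure.pi μ) :=
    fun f => measurePreserving_pi ν μ (fun i => heval i (f i))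
  -- the bad set is null
  set S : Set ((i : Fin n) → ℕ → Ω i) :=
    (⋃ f : Fin n → ℕ, (fun (b : (i : Fin n) → ℕ → Ω i) i => b i (f i)) ⁻¹' Bᶜ) ∪
      ⋃ i, ⋃ m, Function.eval i ⁻¹' (N i m) with hS
  have hSnull : Measure.pi ν S = 0 := by
    rw [hS]
    refine measure_union_null ?_ ?_
    · refine measure_iUnion_null fun f => ?_
      have := (hΦ f).measure_preimage hB.compl.nullMeasurableSet
      rw [this]
      have : Measure.pi μ Bᶜ = 0 := by
        rw [measure_compl hB (measure_ne_top _ _), h1, measure_univ, tsub_self]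
      exact this
    · refine measure_iUnion_null fun i => measure_iUnion_null fun m => ?_
      exact Measure.pi_eval_preimage_null (μ := ν) (hN0 i m)
  have : Sᶜ.Nonempty := by
    by_contra h
    rw [Set.not_nonempty_iff_eq_empty, Set.compl_empty_iff] at h
    have : Measure.pi ν S = 1 := by rw [h]; simp
    rw [hSnull] at this
    exact one_ne_zero this.symm
  obtain ⟨b, hb⟩ := this
  rw [hS, Set.compl_union, Set.compl_iUnion] at hb
  obtain ⟨hb1, hb2⟩ := hb
  simp only [Set.mem_iInter, Set.compl_iUnion, Set.mem_compl_iff, Set.mem_preimage] at hb1 hb2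
  refine ⟨b, fun i m => hb2 i m, fun c hc => ?_⟩
  choose f hf using hc
  have := hb1 f
  rw [not_not] at this
  convert this using 1
  exact funext fun i => hf i
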